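/- γ equals the infimum of the set of real numbers μ for which both K(μ) = μ²M + μC + K and 2μM + C are positive definite. -/

import Mathlib

open Matrix
open scoped ComplexOrder

noncomputable section

/-- The value `x* P x` (which is real for Hermitian `P`), taken as its real part. -/
def qf {n : ℕ} (P : Matrix (Fin n) (Fin n) ℂ) (x : Fin n → ℂ) : ℝ :=
  (star x ⬝ᵥ P.mulVec x).re

/-- The (positive semidefinite) square root of a positive semidefinite matrix,
extended by `0` to all matrices. -/
def msqrt {n : ℕ} (P : Matrix (Fin n) (Fin n) ℂ) : Matrix (Fin n) (Fin n) ℂ :=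
  open scoped Classical in
  if h : P.PosSemidef then
    h.1.eigenvectorUnitary.1 * diagonal ((↑) ∘ (√·) ∘ h.1.eigenvalues) *
      (star h.1.eigenvectorUnitary : Matrix (Fin n) (Fin n) ℂ)
  else 0

/-- The quadratic matrix pencil `K(λ) = λ²M + λC + K`. -/
def Kpen {n : ℕ} (M C K : Matrix (Fin n) (Fin n) ℂ) (lam : ℂ) :
    Matrix (Fin n) (Fin n) ℂ :=
  lam ^ 2 • M + lam • C + K

/-- The real part of the `+`-root of the scalar quadratic
`m(x) λ² + c(x) λ + k(x) = 0`. -/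
def rfun {n : ℕ} (M C K : Matrix (Fin n) (Fin n) ℂ) (x : Fin n → ℂ) : ℝ :=
  open scoped Classical in
  if (qf C x) ^ 2 ≥ 4 * qf M x * qf K x then
    (-(qf C x) + Real.sqrt ((qf C x) ^ 2 - 4 * qf M x * qf K x)) / (2 * qf M x)
  else
    -(qf C x) / (2 * qf M x)

/-- The spectral-shift bound `γ = sup_{x ≠ 0} Re p₊(x)`. -/
def gam {n : ℕ} (M C K : Matrix (Fin n) (Fin n) ℂ) : ℝ :=
  sSup {y : ℝ | ∃ x : Fin n → ℂ, x ≠ 0 ∧ rfun M C K x = y}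

/-- The phase-space matrix `A = [[0, K½ M⁻½], [−M⁻½ K½, −M⁻½ C M⁻½]]`. -/
def phaseA {n : ℕ} (M C K : Matrix (Fin n) (Fin n) ℂ) :
    Matrix (Fin n ⊕ Fin n) (Fin n ⊕ Fin n) ℂ :=
  fromBlocks 0 (msqrt K * (msqrt M)⁻¹)
    (-((msqrt M)⁻¹ * msqrt K)) (-((msqrt M)⁻¹ * C * (msqrt M)⁻¹))

/-- The operator norm of a matrix with respect to the Euclidean norm. -/
def opNorm {m : Type*} [Fintype m] [DecidableEq m] (A : Matrix m m ℂ) : ℝ :=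
  ‖toEuclideanCLM (𝕜 := ℂ) A‖

/-- The block matrix `L(μ) = [[K½ K(μ)⁻½, 0], [μ M½ K(μ)⁻½, I]]`. -/
def Lmat {n : ℕ} (M C K : Matrix (Fin n) (Fin n) ℂ) (mu : ℝ) :
    Matrix (Fin n ⊕ Fin n) (Fin n ⊕ Fin n) ℂ :=
  fromBlocks (msqrt K * (msqrt (Kpen M C K (mu : ℂ)))⁻¹) 0
    ((mu : ℂ) • (msqrt M * (msqrt (Kpen M C K (mu : ℂ)))⁻¹)) 1

/-! ### Auxiliary scalar lemmas -/

private def rsc (m c k : ℝ) : ℝ :=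
  open scoped Classical in
  if c ^ 2 ≥ 4 * m * k then (-c + Real.sqrt (c ^ 2 - 4 * m * k)) / (2 * m)
  else -c / (2 * m)

private lemma rfun_eq_rsc {n : ℕ} (M C K : Matrix (Fin n) (Fin n) ℂ) (x : Fin n → ℂ) :
    rfun M C K x = rsc (qf M x) (qf C x) (qf K x) := by
  unfold rfun rsc
  split_ifs <;> rfl

private lemma rsc_neg {m c k : ℝ} (hm : 0 < m) (hc : 0 < c) (hk : 0 < k) : rsc m c k < 0 := by
  unfold rsc
  split_ifs with h
  · have hd : 0 ≤ c ^ 2 - 4 * m * k := by linarith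
    have hs := Real.sq_sqrt hd
    have hs0 := Real.sqrt_nonneg (c ^ 2 - 4 * m * k)
    have : Real.sqrt (c ^ 2 - 4 * m * k) < c := by nlinarith
    have : -c + Real.sqrt (c ^ 2 - 4 * m * k) < 0 := by linarith
    exact div_neg_of_neg_of_pos this (by linarith)
  · exact div_neg_of_neg_of_pos (by linarith) (by linarith)

private lemma rsc_lt_of {m c k μ : ℝ} (hm : 0 < m)
    (hq : 0 < m * μ ^ 2 + c * μ + k) (hd : 0 < 2 * m * μ + c) : rsc m c k < μ := by
  unfold rsc
  split_ifs with h
  · have hdd : 0 ≤ c ^ 2 - 4 * m * k := by linarith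
    have hs := Real.sq_sqrt hdd
    have hs0 := Real.sqrt_nonneg (c ^ 2 - 4 * m * k)
    have : Real.sqrt (c ^ 2 - 4 * m * k) < 2 * m * μ + c := by nlinarith
    rw [div_lt_iff₀ (by linarith)]
    linarith
  · rw [div_lt_iff₀ (by linarith)]; linarith

private lemma of_rsc_lt {m c k μ : ℝ} (hm : 0 < m) (hr : rsc m c k < μ) :
    0 < m * μ ^ 2 + c * μ + k ∧ 0 < 2 * m * μ + c := by
  unfold rsc at hr
  split_ifs at hr with h
  · have hdd : 0 ≤ c ^ 2 - 4 * m * k := by linarith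
    have hs := Real.sq_sqrt hdd
    have hs0 := Real.sqrt_nonneg (c ^ 2 - 4 * m * k)
    rw [div_lt_iff₀ (by linarith)] at hr
    have h1 : Real.sqrt (c ^ 2 - 4 * m * k) < 2 * m * μ + c := by linarith
    exact ⟨by nlinarith, by linarith⟩
  · push_neg at h
    rw [div_lt_iff₀ (by linarith)] at hr
    exact ⟨by nlinarith, by linarith⟩

/-! ### Auxiliary matrix lemmas -/

private lemma qf_pos {n : ℕ} {P : Matrix (Fin n) (Fin n) ℂ} (hP : P.PosDef)
    {x : Fin n → ℂ} (hx : x ≠ 0) : 0 < qf P x := by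
  have := hP.dotProduct_mulVec_pos hx
  rw [Complex.lt_def] at this
  simpa [qf] using this.1

private lemma herm_im_zero {n : ℕ} {A : Matrix (Fin n) (Fin n) ℂ} (hA : A.IsHermitian)
    (x : Fin n → ℂ) : (star x ⬝ᵥ A.mulVec x).im = 0 := by
  have h : star (star x ⬝ᵥ A.mulVec x) = star x ⬝ᵥ A.mulVec x := by
    rw [← star_dotProduct_star, star_star, star_mulVec, ← dotProduct_mulVec, hA.eq]
  rw [← Complex.conj_eq_iff_im]
  exact h

private lemma posDef_of_qf {n : ℕ} {A : Matrix (Fin n) (Fin n) ℂ} (hA : A.IsHermitian)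
    (h : ∀ x : Fin n → ℂ, x ≠ 0 → 0 < qf A x) : A.PosDef := by
  refine Matrix.PosDef.of_dotProduct_mulVec_pos hA fun x hx => ?_
  rw [Complex.lt_def]
  exact ⟨by simpa [qf] using h x hx, (herm_im_zero hA x).symm⟩

private lemma qf_Kpen {n : ℕ} (M C K : Matrix (Fin n) (Fin n) ℂ) (μ : ℝ) (x : Fin n → ℂ) :
    qf (Kpen M C K (μ : ℂ)) x = qf M x * μ ^ 2 + qf C x * μ + qf K x := by
  have h2 : ((μ : ℂ)) ^ 2 = ((μ ^ 2 : ℝ) : ℂ) := by push_cast; ring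
  simp only [qf, Kpen, h2, add_mulVec, smul_mulVec, dotProduct_add, dotProduct_smul,
    smul_eq_mul, Complex.add_re, Complex.re_ofReal_mul]
  ring

private lemma qf_shift {n : ℕ} (M C : Matrix (Fin n) (Fin n) ℂ) (μ : ℝ) (x : Fin n → ℂ) :
    qf (((2 * μ : ℝ) : ℂ) • M + C) x = 2 * qf M x * μ + qf C x := by
  simp only [qf, add_mulVec, smul_mulVec, dotProduct_add, dotProduct_smul,
    smul_eq_mul, Complex.add_re, Complex.re_ofReal_mul]
  ring

private lemma herm_real_smul {n : ℕ} {A : Matrix (Fin n) (Fin n) ℂ} (hA : A.IsHermitian)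
    (r : ℝ) : ((r : ℂ) • A).IsHermitian := by
  unfold Matrix.IsHermitian
  rw [conjTranspose_smul, hA.eq]
  simp

/-- `γ` equals the infimum of the set of real `μ` for which both `K(μ)` and
`2μM + C` are positive definite. -/
theorem gamma_eq_inf {n : ℕ} (hn : 1 ≤ n)
    (M C K : Matrix (Fin n) (Fin n) ℂ)
    (hM : M.PosDef) (hC : C.PosDef) (hK : K.PosDef) :
    gam M C K =
      sInf {mu : ℝ |
        (Kpen M C K (mu : ℂ)).PosDef ∧ (((2 * mu : ℝ) : ℂ) • M + C).PosDef} := by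
  set S := {mu : ℝ | (Kpen M C K (mu : ℂ)).PosDef ∧ (((2 * mu : ℝ) : ℂ) • M + C).PosDef}
  set R := {y : ℝ | ∃ x : Fin n → ℂ, x ≠ 0 ∧ rfun M C K x = y}
  -- membership criterion for S
  have memS : ∀ μ : ℝ, μ ∈ S ↔ ∀ x : Fin n → ℂ, x ≠ 0 → rfun M C K x < μ := by
    intro μ
    constructor
    · rintro ⟨h1, h2⟩ x hx
      have hq := qf_pos h1 hx
      have hd := qf_pos h2 hx
      rw [qf_Kpen] at hq
      rw [qf_shift] at hd
      rw [rfun_eq_rsc]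
      exact rsc_lt_of (qf_pos hM hx) (by linarith) (by linarith)
    · intro h
      have hKherm : (Kpen M C K (μ : ℂ)).IsHermitian := by
        have h2 : ((μ : ℂ)) ^ 2 = ((μ ^ 2 : ℝ) : ℂ) := by push_cast; ring
        unfold Kpen
        rw [h2]
        exact ((herm_real_smul hM.1 _).add (herm_real_smul hC.1 _)).add hK.1
      have hSherm : (((2 * μ : ℝ) : ℂ) • M + C).IsHermitian :=
        (herm_real_smul hM.1 _).add hC.1
      have key : ∀ x : Fin n → ℂ, x ≠ 0 →
          0 < qf M x * μ ^ 2 + qf C x * μ + qf K x ∧ 0 < 2 * qf M x * μ + qf C x := by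
        intro x hx
        have hh := h x hx
        rw [rfun_eq_rsc] at hh
        have := of_rsc_lt (qf_pos hM hx) hh
        exact ⟨by linarith [this.1], by linarith [this.2]⟩
      constructor
      · exact posDef_of_qf hKherm fun x hx => by rw [qf_Kpen]; exact (key x hx).1
      · exact posDef_of_qf hSherm fun x hx => by rw [qf_shift]; exact (key x hx).2
  -- basic nonzero vector
  have hx0 : ((Pi.single (⟨0, hn⟩ : Fin n) 1 : Fin n → ℂ)) ≠ 0 := by
    intro hcon
    have := congrFun hcon ⟨0, hn⟩
    simp at this
  have hRne : R.Nonempty := ⟨_, _, hx0, rfl⟩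
  have hRbdd : BddAbove R := by
    refine ⟨0, ?_⟩
    rintro y ⟨x, hx, rfl⟩
    rw [rfun_eq_rsc]
    exact le_of_lt (rsc_neg (qf_pos hM hx) (qf_pos hC hx) (qf_pos hK hx))
  have hS0 : (0 : ℝ) ∈ S := by
    constructor
    · have : Kpen M C K ((0 : ℝ) : ℂ) = K := by
        simp [Kpen]
      rw [this]; exact hK
    · have : (((2 * (0 : ℝ) : ℝ) : ℂ)) • M + C = C := by norm_num
      rw [this]; exact hC
  have hSne : S.Nonempty := ⟨0, hS0⟩
  have hSbdd : BddBelow S := by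
    refine ⟨rfun M C K ((Pi.single (⟨0, hn⟩ : Fin n) 1 : Fin n → ℂ)), ?_⟩
    intro μ hμ
    exact le_of_lt ((memS μ).1 hμ _ hx0)
  apply le_antisymm
  · apply csSup_le hRne
    rintro y ⟨x, hx, rfl⟩
    apply le_csInf hSne
    intro μ hμ
    exact le_of_lt ((memS μ).1 hμ x hx)
  · apply le_of_forall_pos_le_add
    intro ε hε
    have hmem : sSup R + ε ∈ S := by
      rw [memS]
      intro x hx
      have h1 : rfun M C K x ≤ sSup R := le_csSup hRbdd ⟨x, hx, rfl⟩
      linarith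
    exact csInf_le hSbdd hmem

end
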